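/- Let 𝒢 = 𝒢(G,H,S) be a strongly connected, non-complete Cayley coset digraph on n vertices with vertex connectivity κ, whose generators are distinct double-coset representatives, and suppose 𝒢 has an atom of size at most (n − κ)/2. Let A₀ be the atom containing the vertex H, let ⋃A₀ be the union of the cosets in A₀, let S₀ = S ∩ ⋃A₀ and S₁ = S ∖ S₀. Then |N(A₀)| equals the number of left cosets of H contained in (⋃A₀)S₁H, this number is at least max(|A₀|, d_{S₁}) where d_{S₁} = Σ_{s∈S₁} |HsH/H|, and |A₀| divides |N(A₀)|. -/

import Mathlib

open Classical

/-- A digraph (given by its edge relation `E`) is strongly connected iff for every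
ordered pair of vertices there is a directed path from the first to the second. -/
def SC {V : Type*} (E : V → V → Prop) : Prop :=
  ∀ a b : V, Relation.ReflTransGen E a b

/-- The subdigraph induced on `A` is strongly connected. -/
def SCOn {V : Type*} (E : V → V → Prop) (A : Set V) : Prop :=
  ∀ a ∈ A, ∀ b ∈ A, Relation.ReflTransGen (fun x y => x ∈ A ∧ y ∈ A ∧ E x y) a b

/-- Out-neighborhood of a set of vertices. -/
def Nout {V : Type*} (E : V → V → Prop) (A : Set V) : Set V :=
  {x | x ∉ A ∧ ∃ y ∈ A, E y x}

/-- Vertex connectivity: the least cardinality of a set `T` of vertices whose removal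
leaves a non-strongly-connected digraph; `Nat.card V - 1` if no such `T` exists. -/
noncomputable def kappa {V : Type*} [Finite V] (E : V → V → Prop) : ℕ :=
  if ∃ T : Set V, ¬ SCOn E Tᶜ then
    sInf {m | ∃ T : Set V, T.ncard = m ∧ ¬ SCOn E Tᶜ}
  else Nat.card V - 1

/-- A part of a digraph. -/
def IsPart {V : Type*} (E : V → V → Prop) (A : Set V) : Prop :=
  A.Nonempty ∧ ((A ∪ Nout E A)ᶜ : Set V).Nonempty

/-- An atom: a part with `|N(A)| = κ` of minimum cardinality among such parts. -/
def IsAtomD {V : Type*} [Finite V] (E : V → V → Prop) (A : Set V) : Prop :=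
  IsPart E A ∧ (Nout E A).ncard = kappa E ∧
    ∀ B : Set V, IsPart E B → (Nout E B).ncard = kappa E → A.ncard ≤ B.ncard
/-- The double coset `K s K`. -/
def dcoset {G : Type*} [Group G] (K : Subgroup G) (s : G) : Set G :=
  {g | ∃ h₁ ∈ K, ∃ h₂ ∈ K, g = h₁ * s * h₂}

/-- Edge relation of the Cayley coset digraph `𝒢(G,H,S)` on the left cosets `G ⧸ H`:
there is an edge from `g₁H` to `g₂H` iff `g₁⁻¹g₂ ∈ HsH` for some `s ∈ S`
(equivalently, `g₁Hs ∩ g₂H ≠ ∅`). -/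
def cayleyRel {G : Type*} [Group G] (H : Subgroup G) (S : Set G) :
    G ⧸ H → G ⧸ H → Prop :=
  fun x y => ∃ s ∈ S, ∃ g₁ g₂ : G, (g₁ : G ⧸ H) = x ∧ (g₂ : G ⧸ H) = y ∧
    g₁⁻¹ * g₂ ∈ dcoset H s

/-- `d_s = |HsH/H|`, the number of left cosets of `H` contained in `HsH`. -/
noncomputable def dval {G : Type*} [Group G] (H : Subgroup G) (s : G) : ℕ :=
  ((QuotientGroup.mk '' dcoset H s : Set (G ⧸ H))).ncard


section Digraph

set_option linter.unusedSectionVars false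
variable {V : Type*} [Finite V] {E : V → V → Prop}

lemma reach_subset {A : Set V} {a b : V} (ha : a ∈ A)
    (h : Relation.ReflTransGen (fun x y => x ∈ (Nout E A)ᶜ ∧ y ∈ (Nout E A)ᶜ ∧ E x y) a b) :
    b ∈ A := by
  induction h with
  | refl => exact ha
  | tail _ hstep ih =>
    rename_i c d _
    by_contra hd
    exact hstep.2.1 ⟨hd, c, ih, hstep.2.2⟩

lemma notSCOn_compl_nout {A : Set V} (hA : A.Nonempty)
    (hA2 : ((A ∪ Nout E A)ᶜ : Set V).Nonempty) : ¬ SCOn E (Nout E A)ᶜ := by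
  obtain ⟨a, ha⟩ := hA
  obtain ⟨b, hb⟩ := hA2
  simp only [Set.mem_compl_iff, Set.mem_union, not_or] at hb
  intro h
  have hb' : b ∈ A := reach_subset ha (h a (fun h' => h'.1 ha) b hb.2)
  exact hb.1 hb'

lemma kappa_le_part {A : Set V} (h : IsPart E A) : kappa E ≤ (Nout E A).ncard := by
  have hn : ¬ SCOn E (Nout E A)ᶜ := notSCOn_compl_nout h.1 h.2
  rw [kappa, if_pos ⟨Nout E A, hn⟩]
  exact Nat.sInf_le ⟨Nout E A, rfl, hn⟩


lemma ncard_bd (A : Set V) : (A ∪ Nout E A).ncard = A.ncard + (Nout E A).ncard := by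
  rw [Set.ncard_union_eq]
  exact Set.disjoint_left.mpr (fun x hx hx' => hx'.1 hx)

lemma bd_inter_subset (A B : Set V) :
    (A ∩ B) ∪ Nout E (A ∩ B) ⊆ ((A ∪ Nout E A) ∩ (B ∪ Nout E B)) := by
  rintro x (⟨hxA, hxB⟩ | ⟨hx, y, ⟨hyA, hyB⟩, hE⟩)
  · exact ⟨Or.inl hxA, Or.inl hxB⟩
  constructor
  · by_cases hA : x ∈ A
    · exact Or.inl hA
    · exact Or.inr ⟨hA, y, hyA, hE⟩
  · by_cases hB : x ∈ B
    · exact Or.inl hB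
    · exact Or.inr ⟨hB, y, hyB, hE⟩

lemma bd_union_subset (A B : Set V) :
    (A ∪ B) ∪ Nout E (A ∪ B) ⊆ ((A ∪ Nout E A) ∪ (B ∪ Nout E B)) := by
  rintro x ((hxA | hxB) | ⟨hx, y, (hyA | hyB), hE⟩)
  · exact Or.inl (Or.inl hxA)
  · exact Or.inr (Or.inl hxB)
  · by_cases hA : x ∈ A
    · exact Or.inl (Or.inl hA)
    · exact Or.inl (Or.inr ⟨hA, y, hyA, hE⟩)
  · by_cases hB : x ∈ B
    · exact Or.inr (Or.inl hB)
    · exact Or.inr (Or.inr ⟨hB, y, hyB, hE⟩)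

lemma atom_card_eq {A B : Set V} (hA : IsAtomD E A) (hB : IsAtomD E B) :
    A.ncard = B.ncard :=
  le_antisymm (hA.2.2 B hB.1 hB.2.1) (hB.2.2 A hA.1 hA.2.1)

lemma atom_inter_eq {A B : Set V} (hA : IsAtomD E A) (hB : IsAtomD E B)
    (hsmall : 2 * A.ncard ≤ Nat.card V - kappa E) (hne : (A ∩ B).Nonempty) : A = B := by
  set κ := kappa E with hκ
  -- A∩B is a part
  have hIpart : IsPart E (A ∩ B) := by
    refine ⟨hne, ?_⟩
    obtain ⟨c, hc⟩ := hA.1.2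
    exact ⟨c, fun h => hc (bd_inter_subset A B h).1⟩
  have hIκ : κ ≤ (Nout E (A ∩ B)).ncard := kappa_le_part hIpart
  -- submodularity
  have hsub : ((A ∩ B) ∪ Nout E (A ∩ B)).ncard + ((A ∪ B) ∪ Nout E (A ∪ B)).ncard ≤
      ((A ∪ Nout E A)).ncard + ((B ∪ Nout E B)).ncard := by
    calc ((A ∩ B) ∪ Nout E (A ∩ B)).ncard + ((A ∪ B) ∪ Nout E (A ∪ B)).ncard
        ≤ ((A ∪ Nout E A) ∩ (B ∪ Nout E B)).ncard + ((A ∪ Nout E A) ∪ (B ∪ Nout E B)).ncard := by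
          exact Nat.add_le_add (Set.ncard_le_ncard (bd_inter_subset A B) (Set.toFinite _))
            (Set.ncard_le_ncard (bd_union_subset A B) (Set.toFinite _))
      _ = ((A ∪ Nout E A)).ncard + ((B ∪ Nout E B)).ncard := by
          rw [add_comm, Set.ncard_union_add_ncard_inter]
  have hAB : A.ncard = B.ncard := atom_card_eq hA hB
  have hcardI : (A ∩ B).ncard + (A ∪ B).ncard = A.ncard + B.ncard := by
    rw [add_comm]; exact Set.ncard_union_add_ncard_inter A B
  have h1 : 0 < (A ∩ B).ncard := (Set.ncard_pos (Set.toFinite _)).mpr hne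
  -- A ∪ B is a part
  have hUpart : IsPart E (A ∪ B) := by
    refine ⟨hA.1.1.mono Set.subset_union_left, ?_⟩
    have hlt : ((A ∪ B) ∪ Nout E (A ∪ B)).ncard < Nat.card V := by
      have e1 := ncard_bd (E := E) A
      have e2 := ncard_bd (E := E) B
      have e3 := ncard_bd (E := E) (A ∩ B)
      have e5 : A.ncard + κ ≤ Nat.card V - κ + κ := by
        have : 0 < A.ncard := (Set.ncard_pos (Set.toFinite _)).mpr hA.1.1
        omega
      have hκn : κ ≤ Nat.card V := by
        have : 0 < A.ncard := (Set.ncard_pos (Set.toFinite _)).mpr hA.1.1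
        omega
      have := hA.2.1
      have := hB.2.1
      omega
    have : ((A ∪ B) ∪ Nout E (A ∪ B))ᶜ.ncard + ((A ∪ B) ∪ Nout E (A ∪ B)).ncard
        = Nat.card V := by
      rw [← Set.ncard_add_ncard_compl ((A ∪ B) ∪ Nout E (A ∪ B))]; omega
    exact Set.nonempty_of_ncard_ne_zero (by omega)
  have hUκ : κ ≤ (Nout E (A ∪ B)).ncard := kappa_le_part hUpart
  -- conclude |N(A∩B)| = κ
  have hIeq : (Nout E (A ∩ B)).ncard = κ := by
    have e1 := ncard_bd (E := E) A
    have e2 := ncard_bd (E := E) B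
    have e3 := ncard_bd (E := E) (A ∩ B)
    have e4 := ncard_bd (E := E) (A ∪ B)
    have := hA.2.1
    have := hB.2.1
    have hle : (A ∪ B).ncard ≤ (A ∪ B).ncard := le_refl _
    omega
  have hAle : A.ncard ≤ (A ∩ B).ncard := hA.2.2 _ hIpart hIeq
  have hBle : B.ncard ≤ (A ∩ B).ncard := hB.2.2 _ hIpart hIeq
  have hIA : A ∩ B = A :=
    Set.eq_of_subset_of_ncard_le Set.inter_subset_left hAle (Set.toFinite _)
  have hIB : A ∩ B = B :=
    Set.eq_of_subset_of_ncard_le Set.inter_subset_right hBle (Set.toFinite _)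
  rw [← hIA, hIB]


lemma nout_image (σ : V ≃ V) (hσ : ∀ x y, E x y ↔ E (σ x) (σ y)) (A : Set V) :
    Nout E (σ '' A) = σ '' Nout E A := by
  ext x
  constructor
  · rintro ⟨hx, y, ⟨z, hz, rfl⟩, hE⟩
    refine ⟨σ.symm x, ⟨?_, z, hz, ?_⟩, by simp⟩
    · intro h; exact hx ⟨σ.symm x, h, by simp⟩
    · rw [hσ]; simpa using hE
  · rintro ⟨y, ⟨hy, z, hz, hE⟩, rfl⟩
    refine ⟨?_, σ z, ⟨z, hz, rfl⟩, (hσ z y).mp hE⟩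
    rintro ⟨w, hw, hww⟩
    exact hy (by rwa [σ.injective hww] at hw)

lemma isPart_image (σ : V ≃ V) (hσ : ∀ x y, E x y ↔ E (σ x) (σ y)) {A : Set V}
    (h : IsPart E A) : IsPart E (σ '' A) := by
  refine ⟨h.1.image σ, ?_⟩
  obtain ⟨c, hc⟩ := h.2
  refine ⟨σ c, ?_⟩
  rw [nout_image σ hσ, ← Set.image_union]
  rintro ⟨w, hw, hww⟩
  exact hc (by rwa [σ.injective hww] at hw)

lemma isAtomD_image (σ : V ≃ V) (hσ : ∀ x y, E x y ↔ E (σ x) (σ y)) {A : Set V}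
    (h : IsAtomD E A) : IsAtomD E (σ '' A) := by
  have hσ' : ∀ x y, E x y ↔ E (σ.symm x) (σ.symm y) := by
    intro x y; rw [hσ (σ.symm x) (σ.symm y)]; simp
  refine ⟨isPart_image σ hσ h.1, ?_, ?_⟩
  · rw [nout_image σ hσ, Set.ncard_image_of_injective _ σ.injective]
    exact h.2.1
  · intro B hB hBκ
    rw [Set.ncard_image_of_injective _ σ.injective]
    have hB' : IsPart E (σ.symm '' B) := isPart_image σ.symm hσ' hB
    have : (Nout E (σ.symm '' B)).ncard = kappa E := by
      rw [nout_image σ.symm hσ', Set.ncard_image_of_injective _ σ.symm.injective]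
      exact hBκ
    have := h.2.2 _ hB' this
    rwa [Set.ncard_image_of_injective _ σ.symm.injective] at this

end Digraph



section GroupAux

lemma sum_ncard_le_ncard {V : Type*} {ι : Type*} [DecidableEq ι] (t : Finset ι)
    (f : ι → Set V) (Q : Set V) (hQ : Q.Finite)
    (hsub : ∀ i ∈ t, f i ⊆ Q)
    (hdisj : ∀ i ∈ t, ∀ j ∈ t, i ≠ j → Disjoint (f i) (f j)) :
    ∑ i ∈ t, (f i).ncard ≤ Q.ncard := by
  induction t using Finset.induction generalizing Q with
  | empty => simp
  | insert a u hnotmem ih =>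
    rw [Finset.sum_insert hnotmem]
    have hfa : f a ⊆ Q := hsub a (Finset.mem_insert_self a u)
    have hrest : ∑ i ∈ u, (f i).ncard ≤ (Q \ f a).ncard := by
      refine ih (Q \ f a) hQ.diff ?_ ?_
      · intro i hi
        have h1 : f i ⊆ Q := hsub i (Finset.mem_insert_of_mem hi)
        have h2 : Disjoint (f i) (f a) := hdisj i (Finset.mem_insert_of_mem hi) a
          (Finset.mem_insert_self a u) (fun h => hnotmem (h ▸ hi))
        intro x hx
        exact ⟨h1 hx, Set.disjoint_left.mp h2 hx⟩
      · intro i hi j hj hij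
        exact hdisj i (Finset.mem_insert_of_mem hi) j (Finset.mem_insert_of_mem hj) hij
    have : (f a).ncard + (Q \ f a).ncard = Q.ncard := by
      rw [add_comm]
      exact Set.ncard_diff_add_ncard_of_subset hfa hQ
    omega

lemma card_saturated {G : Type*} [Group G] [Finite G] (K : Subgroup G) (T : Set G)
    (hT : ∀ g ∈ T, ∀ k ∈ K, g * k ∈ T) :
    T.ncard = ((QuotientGroup.mk '' T : Set (G ⧸ K))).ncard * Nat.card K := by
  have hpre : (QuotientGroup.mk ⁻¹' (QuotientGroup.mk '' T : Set (G ⧸ K)) : Set G) = T := by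
    ext g
    constructor
    · rintro ⟨a, ha, hag⟩
      have : a⁻¹ * g ∈ K := (QuotientGroup.eq).mp hag
      have := hT a ha _ this
      simpa using this
    · intro h
      exact ⟨g, h, rfl⟩
  have h1 : Nat.card (QuotientGroup.mk ⁻¹' (QuotientGroup.mk '' T : Set (G ⧸ K)) : Set G)
      = Nat.card K * Nat.card ((QuotientGroup.mk '' T : Set (G ⧸ K))) := by
    rw [Nat.card_congr (QuotientGroup.preimageMkEquivSubgroupProdSet K _), Nat.card_prod]
  rw [hpre] at h1
  rw [← Nat.card_coe_set_eq, h1, ← Nat.card_coe_set_eq, mul_comm]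

lemma dcoset_eq_of_mem {G : Type*} [Group G] {H : Subgroup G} {s b : G}
    (hb : b ∈ dcoset H s) : dcoset H b = dcoset H s := by
  obtain ⟨h₁, hh₁, h₂, hh₂, rfl⟩ := hb
  ext x
  constructor
  · rintro ⟨a, ha, c, hc, rfl⟩
    exact ⟨a * h₁, H.mul_mem ha hh₁, h₂ * c, H.mul_mem hh₂ hc, by group⟩
  · rintro ⟨a, ha, c, hc, rfl⟩
    exact ⟨a * h₁⁻¹, H.mul_mem ha (H.inv_mem hh₁), h₂⁻¹ * c, H.mul_mem (H.inv_mem hh₂) hc,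
      by group⟩

lemma dcoset_img_disjoint {G : Type*} [Group G] {H : Subgroup G} {s t : G}
    (hst : dcoset H s ≠ dcoset H t) :
    Disjoint (QuotientGroup.mk '' dcoset H s : Set (G ⧸ H))
      (QuotientGroup.mk '' dcoset H t : Set (G ⧸ H)) := by
  rw [Set.disjoint_left]
  rintro x ⟨a, ha, hax⟩ ⟨b, hb, hbx⟩
  have hab : a⁻¹ * b ∈ H := (QuotientGroup.eq).mp (hax.trans hbx.symm)
  have hbs : b ∈ dcoset H s := by
    obtain ⟨h₁, hh₁, h₂, hh₂, hae⟩ := ha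
    refine ⟨h₁, hh₁, h₂ * (a⁻¹ * b), H.mul_mem hh₂ hab, ?_⟩
    rw [← mul_assoc, ← hae]; group
  exact hst ((dcoset_eq_of_mem hbs).symm.trans (dcoset_eq_of_mem hb))

end GroupAux


lemma nout_nonempty_of_SC {V : Type*} {E : V → V → Prop} (hSC : SC E) {A : Set V}
    (h : IsPart E A) : (Nout E A).Nonempty := by
  by_contra hne
  rw [Set.not_nonempty_iff_eq_empty] at hne
  obtain ⟨a, ha⟩ := h.1
  obtain ⟨b, hb⟩ := h.2
  have hreach : ∀ c, Relation.ReflTransGen E a c → c ∈ A := by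
    intro c hc
    induction hc with
    | refl => exact ha
    | tail _ hstep ih =>
      rename_i x y _
      by_contra hy
      have : y ∈ Nout E A := ⟨hy, x, ih, hstep⟩
      simp [hne] at this
  exact hb (Or.inl (hreach b (hSC a b)))


/-- Let `A₀` be the atom of `𝒢(G,H,S)` containing the vertex `H`, let `⋃A₀` be the
union of the cosets in `A₀`, `S₀ = S ∩ ⋃A₀`, `S₁ = S ∖ S₀`. Then `|N(A₀)|` is the
number of left cosets of `H` contained in `(⋃A₀)S₁H`, it is at least
`max(|A₀|, d_{S₁})`, and `|A₀|` divides `|N(A₀)|`. -/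
theorem stmt_9 {G : Type*} [Group G] [Finite G] (H : Subgroup G) (S : Finset G)
    (hSH : ∀ s ∈ S, s ∉ H)
    (hdc : ∀ s ∈ S, ∀ t ∈ S, s ≠ t → dcoset H s ≠ dcoset H t)
    (hconn : SC (cayleyRel H (S : Set G)))
    (hnc : ∃ x y : G ⧸ H, x ≠ y ∧ ¬ cayleyRel H (S : Set G) x y)
    (hatom : ∃ A : Set (G ⧸ H), IsAtomD (cayleyRel H (S : Set G)) A ∧
      2 * A.ncard ≤ Nat.card (G ⧸ H) - kappa (cayleyRel H (S : Set G)))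
    (A₀ : Set (G ⧸ H)) (hA₀ : IsAtomD (cayleyRel H (S : Set G)) A₀)
    (hmem : ((1 : G) : G ⧸ H) ∈ A₀)
    (U : Set G) (hU : U = {g : G | (g : G ⧸ H) ∈ A₀})
    (S₁ : Finset G) (hS₁ : S₁ = S.filter (fun s => s ∉ U)) :
    (Nout (cayleyRel H (S : Set G)) A₀).ncard =
      ((QuotientGroup.mk '' {x : G | ∃ u ∈ U, ∃ s ∈ S₁, ∃ h ∈ H, x = u * s * h} :
        Set (G ⧸ H))).ncard ∧
    max A₀.ncard (∑ s ∈ S₁, dval H s) ≤ (Nout (cayleyRel H (S : Set G)) A₀).ncard ∧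
    A₀.ncard ∣ (Nout (cayleyRel H (S : Set G)) A₀).ncard := by
  classical
  set E := cayleyRel H (S : Set G) with hEdef
  have hmemU : ∀ g : G, g ∈ U ↔ (g : G ⧸ H) ∈ A₀ := by
    intro g; rw [hU]; exact Iff.rfl
  have h1U : (1 : G) ∈ U := (hmemU 1).mpr hmem
  have hUH : ∀ g ∈ U, ∀ h ∈ H, g * h ∈ U := by
    intro g hg h hh
    rw [hmemU]
    have heq : ((g * h : G) : G ⧸ H) = (g : G ⧸ H) := by
      rw [QuotientGroup.eq]
      simpa [mul_assoc] using H.inv_mem hh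
    rw [heq]
    exact (hmemU g).mp hg
  have hHU : ∀ h ∈ H, h ∈ U := by
    intro h hh
    rw [hmemU]
    have heq : ((h : G) : G ⧸ H) = ((1 : G) : G ⧸ H) := by
      rw [QuotientGroup.eq]
      simpa using H.inv_mem hh
    rw [heq]
    exact hmem
  -- equivariance of the edge relation under left multiplication
  have hfor : ∀ (u : G) (x y : G ⧸ H), E x y → E (u • x) (u • y) := by
    rintro u x y ⟨s, hs, g₁, g₂, h1, h2, hd⟩
    refine ⟨s, hs, u * g₁, u * g₂, by rw [← h1]; rfl, by rw [← h2]; rfl, ?_⟩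
    have : (u * g₁)⁻¹ * (u * g₂) = g₁⁻¹ * g₂ := by group
    rw [this]; exact hd
  have hiff : ∀ (u : G) (x y : G ⧸ H), E x y ↔ E (u • x) (u • y) := by
    intro u x y
    refine ⟨hfor u x y, fun h => ?_⟩
    have := hfor u⁻¹ _ _ h
    simpa [smul_smul] using this
  have hsmall : 2 * A₀.ncard ≤ Nat.card (G ⧸ H) - kappa E := by
    obtain ⟨A, hA, hAs⟩ := hatom
    rwa [atom_card_eq hA₀ hA]
  -- U is closed under multiplication
  have hUmul : ∀ u ∈ U, ∀ g ∈ U, u * g ∈ U := by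
    intro u hu g hg
    have hAtomImg : IsAtomD E ((MulAction.toPerm u : Equiv.Perm (G ⧸ H)) '' A₀) :=
      isAtomD_image _ (fun x y => hiff u x y) hA₀
    have hu1 : (MulAction.toPerm u : Equiv.Perm (G ⧸ H)) ((1 : G) : G ⧸ H)
        = ((u : G) : G ⧸ H) := by
      show u • (((1 : G) : G ⧸ H)) = _
      rw [show u • (((1 : G) : G ⧸ H)) = ((u * 1 : G) : G ⧸ H) from rfl, mul_one]
    have hint : (((MulAction.toPerm u : Equiv.Perm (G ⧸ H)) '' A₀) ∩ A₀).Nonempty :=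
      ⟨((u : G) : G ⧸ H), ⟨((1 : G) : G ⧸ H), hmem, hu1⟩, (hmemU u).mp hu⟩
    have heq : (MulAction.toPerm u : Equiv.Perm (G ⧸ H)) '' A₀ = A₀ :=
      atom_inter_eq hAtomImg hA₀
        (by rwa [Set.ncard_image_of_injective _ (Equiv.injective _)]) hint
    have hmem2 : (u • ((g : G) : G ⧸ H)) ∈ A₀ := by
      rw [← heq]; exact ⟨_, (hmemU g).mp hg, rfl⟩
    rw [hmemU]
    rw [show ((u * g : G) : G ⧸ H) = u • ((g : G) : G ⧸ H) from rfl]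
    exact hmem2
  have hUinv : ∀ u ∈ U, u⁻¹ ∈ U := by
    intro u hu
    have hpow : ∀ k : ℕ, u ^ k ∈ U := by
      intro k; induction k with
      | zero => simpa using h1U
      | succ n ih => rw [pow_succ]; exact hUmul _ ih _ hu
    have ho : 0 < orderOf u := orderOf_pos u
    have h1 : u * u ^ (orderOf u - 1) = 1 := by
      rw [← pow_succ', Nat.sub_add_cancel ho]
      exact pow_orderOf_eq_one u
    rw [inv_eq_of_mul_eq_one_right h1]
    exact hpow _
  set W : Set G := {x : G | ∃ u ∈ U, ∃ s ∈ S₁, ∃ h ∈ H, x = u * s * h} with hWdef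
  have hS₁mem : ∀ s : G, s ∈ S₁ ↔ s ∈ S ∧ s ∉ U := by
    intro s; rw [hS₁]; simp
  -- Claim 1 : Nout A₀ = W/H
  have hclaim : Nout E A₀ = (QuotientGroup.mk '' W : Set (G ⧸ H)) := by
    ext x
    simp only [Nout, hEdef, cayleyRel, dcoset, Set.mem_setOf_eq, Set.mem_image, hWdef]
    constructor
    · rintro ⟨hx, y, hy, s, hsS, g₁, g₂, hg₁, hg₂, h₁, hh₁, h₂, hh₂, hprod⟩
      have hg₁U : g₁ ∈ U := (hmemU g₁).mpr (hg₁ ▸ hy)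
      have hg₂eq : g₂ = (g₁ * h₁) * s * h₂ := by
        have h' : g₂ = g₁ * (g₁⁻¹ * g₂) := by group
        rw [h', hprod]; group
      by_cases hsU : s ∈ U
      · exfalso
        have : g₂ ∈ U := by
          rw [hg₂eq]
          exact hUH _ (hUmul _ (hUH _ hg₁U _ hh₁) _ hsU) _ hh₂
        exact hx (hg₂ ▸ (hmemU g₂).mp this)
      · exact ⟨g₂, ⟨g₁ * h₁, hUH _ hg₁U _ hh₁, s, (hS₁mem s).mpr ⟨hsS, hsU⟩, h₂, hh₂, hg₂eq⟩,
          hg₂⟩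
    · rintro ⟨w, ⟨u, hu, s, hs, h, hh, rfl⟩, rfl⟩
      obtain ⟨hsS, hsU⟩ := (hS₁mem s).mp hs
      refine ⟨?_, (u : G ⧸ H), (hmemU u).mp hu, s, hsS, u, u * s * h, rfl, rfl, 1, H.one_mem,
        h, hh, by group⟩
      intro hmemA
      have husH : u * s * h ∈ U := (hmemU _).mpr hmemA
      have hsmem : s ∈ U := by
        have hrw : u⁻¹ * (u * s * h) * h⁻¹ = s := by group
        rw [← hrw]
        exact hUH _ (hUmul _ (hUinv _ hu) _ husH) _ (H.inv_mem hh)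
      exact hsU hsmem
  -- U is a subgroup
  set Usub : Subgroup G :=
    { carrier := U
      one_mem' := h1U
      mul_mem' := fun ha hb => hUmul _ ha _ hb
      inv_mem' := fun ha => hUinv _ ha } with hUsub
  have hWright : ∀ g ∈ W, ∀ k ∈ H, g * k ∈ W := by
    rintro g ⟨u, hu, s, hs, h, hh, rfl⟩ k hk
    exact ⟨u, hu, s, hs, h * k, H.mul_mem hh hk, by group⟩
  have hWleft : ∀ v ∈ U, ∀ g ∈ W, v * g ∈ W := by
    rintro v hv g ⟨u, hu, s, hs, h, hh, rfl⟩
    exact ⟨v * u, hUmul _ hv _ hu, s, hs, h, hh, by group⟩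
  have hWcard : W.ncard = (QuotientGroup.mk '' W : Set (G ⧸ H)).ncard * Nat.card H :=
    card_saturated H W hWright
  have hUcard : U.ncard = A₀.ncard * Nat.card H := by
    have himg : (QuotientGroup.mk '' U : Set (G ⧸ H)) = A₀ := by
      ext x; constructor
      · rintro ⟨g, hg, rfl⟩; exact (hmemU g).mp hg
      · intro hx
        obtain ⟨g, rfl⟩ := QuotientGroup.mk_surjective x
        exact ⟨g, (hmemU g).mpr hx, rfl⟩
    rw [card_saturated H U hUH, himg]
  set Winv : Set G := (fun x => x⁻¹) '' W with hWinvdef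
  have hWinvcard : Winv.ncard = W.ncard := Set.ncard_image_of_injective _ inv_injective
  have hWinvsat : ∀ g ∈ Winv, ∀ k ∈ Usub, g * k ∈ Winv := by
    rintro g ⟨w, hw, rfl⟩ k hk
    exact ⟨k⁻¹ * w, hWleft _ (hUinv _ hk) _ hw, by group⟩
  set m := ((QuotientGroup.mk '' Winv : Set (G ⧸ Usub))).ncard with hmdef
  have hWU : W.ncard = m * Nat.card Usub := by
    rw [← hWinvcard]; exact card_saturated Usub Winv hWinvsat
  have hUcard' : Nat.card Usub = U.ncard := by
    rw [← Nat.card_coe_set_eq]; rfl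
  have hHpos : 0 < Nat.card H := Nat.card_pos
  have hQcard : (QuotientGroup.mk '' W : Set (G ⧸ H)).ncard = m * A₀.ncard := by
    have hmm : (QuotientGroup.mk '' W : Set (G ⧸ H)).ncard * Nat.card H
        = m * A₀.ncard * Nat.card H := by
      rw [← hWcard, hWU, hUcard', hUcard]; ring
    exact Nat.eq_of_mul_eq_mul_right hHpos hmm
  have hNoutne : (Nout E A₀).Nonempty := nout_nonempty_of_SC hconn hA₀.1
  have hQpos : 0 < (QuotientGroup.mk '' W : Set (G ⧸ H)).ncard :=
    (Set.ncard_pos (Set.toFinite _)).mpr (hclaim ▸ hNoutne)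
  have hmpos : 0 < m := by
    rcases Nat.eq_zero_or_pos m with h | h
    · rw [hQcard, h, zero_mul] at hQpos; omega
    · exact h
  have hA₀le : A₀.ncard ≤ (QuotientGroup.mk '' W : Set (G ⧸ H)).ncard := by
    rw [hQcard]
    exact Nat.le_mul_of_pos_left _ hmpos
  have hsum : ∑ s ∈ S₁, dval H s ≤ (QuotientGroup.mk '' W : Set (G ⧸ H)).ncard := by
    have := sum_ncard_le_ncard S₁
      (fun s => (QuotientGroup.mk '' dcoset H s : Set (G ⧸ H)))
      (QuotientGroup.mk '' W : Set (G ⧸ H)) (Set.toFinite _)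
      (by
        intro s hs
        rintro x ⟨g, ⟨h₁, hh₁, h₂, hh₂, rfl⟩, rfl⟩
        exact ⟨h₁ * s * h₂, ⟨h₁, hHU _ hh₁, s, hs, h₂, hh₂, rfl⟩, rfl⟩)
      (by
        intro s hs t ht hst
        exact dcoset_img_disjoint
          (hdc s ((hS₁mem s).mp hs).1 t ((hS₁mem t).mp ht).1 hst))
    simpa [dval] using this
  refine ⟨by rw [hclaim], ?_, ?_⟩
  · rw [hclaim]
    exact max_le hA₀le hsum
  · rw [hclaim, hQcard]
    exact ⟨m, mul_comm m A₀.ncard⟩
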